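/- arXiv:2211.08578 — 2 statements merged into one kernel-verified Lean document; each statement's English description precedes it below -/
import Mathlib

section
/- Let n ≥ 1, let A be an n×n real symmetric matrix with all eigenvalues in [μ, L] where 0 < μ ≤ L, let b ∈ ℝⁿ, and let f(x) = ½xᵀAx − bᵀx with unique minimizer x* = A⁻¹b. Fix 0 < η ≤ 2/(L+μ), m ≥ 1, λ > 0. Suppose a sequence x_0, x_1, …, x_{K+1} is generated so that for each k = 0, …, K the iterate x_{k+1} is produced by the Anderson-accelerated gradient step with window m_k = min(m, k) (for m_k = 0 the step is plain gradient descent x_{k+1} = x_k − η∇f(x_k) and we set δ_k = 1; for m_k ≥ 1, with α computed from the regularized least squares, x_{k+1} = Σ_{j=k−m_k}^{k} α_j (x_j − η∇f(x_j)) and δ_k = ‖Π_k∇f(x_k)‖/‖∇f(x_k)‖, where Π_k = I − U_k(U_kᵀU_k + λI)⁻¹U_kᵀ and U_k has columns ∇f(x_k) − ∇f(x_j), j = k−m_k, …, k−1). Then ‖x_{K+1} − x*‖ ≤ (∏_{j=0}^{K} δ_j) (1 − ημ)^{K+1} (L/μ) ‖x_0 − x*‖. -/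
open scoped RealInnerProductSpace Matrix
open Finset

lemma sym_op_norm_bound {E : Type*} [NormedAddCommGroup E] [InnerProductSpace ℝ E]
    (T : E →ₗ[ℝ] E) (hT : ∀ u v, ⟪T u, v⟫ = ⟪u, T v⟫) (C : ℝ)
    (hC : ∀ v, |⟪T v, v⟫| ≤ C * ‖v‖ ^ 2) (v : E) : ‖T v‖ ≤ C * ‖v‖ := by
  rcases eq_or_ne v 0 with rfl | hv
  · simp
  have hvpos : (0:ℝ) < ‖v‖ := norm_pos_iff.2 hv
  rcases eq_or_ne (T v) 0 with h0 | h0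
  · have h := hC v
    rw [h0] at h
    simp only [inner_zero_left, abs_zero] at h
    have hC0 : 0 ≤ C := by
      have h2 : (0:ℝ) < ‖v‖ ^ 2 := by positivity
      nlinarith
    simp only [h0, norm_zero]
    positivity
  · set w : E := (‖v‖ / ‖T v‖) • T v with hw
    have hTv : (0:ℝ) < ‖T v‖ := norm_pos_iff.2 h0
    have hwnorm : ‖w‖ = ‖v‖ := by
      rw [hw, norm_smul, Real.norm_eq_abs, abs_div, abs_norm, abs_norm,
        div_mul_cancel₀ _ (ne_of_gt hTv)]
    have hkey : 4 * ⟪T v, w⟫ = ⟪T (v + w), v + w⟫ - ⟪T (v - w), v - w⟫ := by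
      simp only [map_add, map_sub, inner_add_left, inner_add_right, inner_sub_left,
        inner_sub_right]
      have h1 := hT v w
      have h2 := hT w v
      linarith [real_inner_comm (T v) w]
    have hinner : ⟪T v, w⟫ = ‖v‖ * ‖T v‖ := by
      rw [hw, real_inner_smul_right, real_inner_self_eq_norm_sq]
      field_simp
    have hb1 := abs_le.1 (hC (v + w))
    have hb2 := abs_le.1 (hC (v - w))
    have hpar := parallelogram_law_with_norm ℝ v w
    have hsum : ‖v + w‖ ^ 2 + ‖v - w‖ ^ 2 = 4 * ‖v‖ ^ 2 := by
      rw [hwnorm] at hpar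
      rw [pow_two, pow_two, pow_two]
      linarith
    have h4 : 4 * (‖v‖ * ‖T v‖) ≤ C * ‖v + w‖ ^ 2 + C * ‖v - w‖ ^ 2 := by
      rw [← hinner]
      linarith [hkey, hb1.1, hb1.2, hb2.1, hb2.2]
    have h5 : C * ‖v + w‖ ^ 2 + C * ‖v - w‖ ^ 2 = 4 * (C * ‖v‖ ^ 2) := by
      have : C * ‖v + w‖ ^ 2 + C * ‖v - w‖ ^ 2 = C * (‖v + w‖ ^ 2 + ‖v - w‖ ^ 2) := by ring
      rw [this, hsum]; ring
    have h7 : ‖v‖ * ‖T v‖ ≤ C * ‖v‖ ^ 2 := by linarith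
    calc ‖T v‖ = (‖v‖ * ‖T v‖) / ‖v‖ := by field_simp
      _ ≤ (C * ‖v‖ ^ 2) / ‖v‖ := by gcongr
      _ = C * ‖v‖ := by field_simp

lemma euclid_sum_apply {n : ℕ} {ι : Type*} (s : Finset ι)
    (f : ι → EuclideanSpace ℝ (Fin n)) (i : Fin n) :
    (∑ j ∈ s, f j) i = ∑ j ∈ s, f j i := by
  induction s using Finset.cons_induction with
  | empty => simp
  | cons a s ha ih => rw [Finset.sum_cons, Finset.sum_cons, PiLp.add_apply, ih]

set_option maxHeartbeats 1000000 in
/-- **Convergence of Anderson-accelerated gradient descent for quadratic functions.**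
For `f x = ½ xᵀAx − bᵀx` with symmetric `A` whose spectrum lies in `[μ, L]`, `0 < μ ≤ L`,
minimizer `x* = A⁻¹ b`, step size `0 < η ≤ 2/(L+μ)`, window `m ≥ 1`, regularization
`lam > 0`: if the iterates `x_0, …, x_{K+1}` are produced by Anderson-accelerated
gradient steps with window `m_k = min m k` (plain gradient descent with `δ_k = 1`
when `m_k = 0`), then
`‖x_{K+1} − x*‖ ≤ (∏_{j=0}^{K} δ_j) (1−ημ)^{K+1} (L/μ) ‖x_0 − x*‖`. -/
theorem aa_gd_quadratic_convergence
    (n m K : ℕ) (hn : 1 ≤ n) (hm : 1 ≤ m)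
    (A : Matrix (Fin n) (Fin n) ℝ) (hA : A.IsSymm)
    (μ L : ℝ) (hμ : 0 < μ) (hμL : μ ≤ L)
    (hspec : ∀ v : EuclideanSpace ℝ (Fin n),
      μ * ‖v‖ ^ 2 ≤ ⟪Matrix.toEuclideanLin A v, v⟫ ∧
      ⟪Matrix.toEuclideanLin A v, v⟫ ≤ L * ‖v‖ ^ 2)
    (b : EuclideanSpace ℝ (Fin n))
    (g : EuclideanSpace ℝ (Fin n) → EuclideanSpace ℝ (Fin n))
    (hg : ∀ z, g z = Matrix.toEuclideanLin A z - b)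
    (xstar : EuclideanSpace ℝ (Fin n))
    (hxstar : xstar = Matrix.toEuclideanLin A⁻¹ b)
    (η : ℝ) (hη0 : 0 < η) (hη : η ≤ 2 / (L + μ))
    (lam : ℝ) (hlam : 0 < lam)
    (x : ℕ → EuclideanSpace ℝ (Fin n))
    (δ : ℕ → ℝ)
    -- each step `k = 0, …, K` is an Anderson-accelerated gradient step with window `min m k`
    (hstep : ∀ k ≤ K,
      (min m k = 0 → x (k + 1) = x k - η • g (x k) ∧ δ k = 1) ∧
      (∀ mk : ℕ, min m k = mk → 0 < mk →
        ∃ (U : Matrix (Fin n) (Fin mk) ℝ) (α' : Fin mk → ℝ),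
          (∀ (i : Fin n) (j : Fin mk), U i j = (g (x k) - g (x (k - mk + j))) i) ∧
          α' = ((Uᵀ * U + lam • 1)⁻¹ * Uᵀ).mulVec (g (x k)) ∧
          x (k + 1) =
            (∑ j : Fin mk, α' j • (x (k - mk + j) - η • g (x (k - mk + j))))
              + (1 - ∑ j, α' j) • (x k - η • g (x k)) ∧
          δ k = ‖Matrix.toEuclideanLin (1 - U * (Uᵀ * U + lam • 1)⁻¹ * Uᵀ) (g (x k))‖
                  / ‖g (x k)‖)) :
    ‖x (K + 1) - xstar‖ ≤
      (∏ j ∈ Finset.range (K + 1), δ j) * (1 - η * μ) ^ (K + 1) * (L / μ) * ‖x 0 - xstar‖ := by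
  set T : EuclideanSpace ℝ (Fin n) →ₗ[ℝ] EuclideanSpace ℝ (Fin n) :=
    Matrix.toEuclideanLin A with hT
  -- symmetry of T
  have hAH : A.IsHermitian := by
    rw [Matrix.IsHermitian]
    rw [Matrix.conjTranspose]
    ext i j
    simpa using congrFun (congrFun hA i) j
  have hTsym : ∀ u v, ⟪T u, v⟫ = ⟪u, T v⟫ :=
    fun u v => (Matrix.isHermitian_iff_isSymmetric.1 hAH) u v
  have hLμpos : (0:ℝ) < L + μ := by linarith
  have hηLμ : η * (L + μ) ≤ 2 := by
    rw [le_div_iff₀ hLμpos] at hη; linarith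
  have honemu : 0 ≤ 1 - η * μ := by nlinarith
  -- operator norm bounds
  have hAnorm : ∀ v, ‖T v‖ ≤ L * ‖v‖ := by
    apply sym_op_norm_bound T hTsym
    intro v
    have h := hspec v
    rw [abs_le]
    constructor
    · nlinarith [sq_nonneg ‖v‖]
    · exact h.2
  have hSnorm : ∀ v, ‖v - η • T v‖ ≤ (1 - η * μ) * ‖v‖ := by
    have := sym_op_norm_bound (LinearMap.id - η • T) (fun u v => by
      simp only [LinearMap.sub_apply, LinearMap.smul_apply, LinearMap.id_apply,
        inner_sub_left, inner_sub_right, real_inner_smul_left, real_inner_smul_right]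
      rw [hTsym u v]) (1 - η * μ) (fun v => by
        have h := hspec v
        have hv2 : (0:ℝ) ≤ ‖v‖ ^ 2 := sq_nonneg _
        simp only [LinearMap.sub_apply, LinearMap.smul_apply, LinearMap.id_apply,
          inner_sub_left, inner_smul_left]
        rw [real_inner_self_eq_norm_sq]
        rw [abs_le]
        simp only [RCLike.star_def, starRingEnd_apply, star_trivial]
        constructor
        · nlinarith
        · nlinarith)
    intro v
    have h := this v
    simpa using h
  have hlow : ∀ v, μ * ‖v‖ ≤ ‖T v‖ := by
    intro v
    rcases eq_or_ne v 0 with rfl | hv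
    · simp
    have hvpos : (0:ℝ) < ‖v‖ := norm_pos_iff.2 hv
    have h1 := (hspec v).1
    have h2 := real_inner_le_norm (T v) v
    have : μ * ‖v‖ ^ 2 ≤ ‖T v‖ * ‖v‖ := le_trans h1 h2
    nlinarith
  -- invertibility and T xstar = b
  have hdet : IsUnit A.det := by
    rw [isUnit_iff_ne_zero]
    intro h
    obtain ⟨v, hv0, hv⟩ := Matrix.exists_mulVec_eq_zero_iff.2 h
    have hTv : T ((WithLp.equiv 2 (Fin n → ℝ)).symm v) = 0 := by
      rw [hT, WithLp.equiv_symm_apply, Matrix.toEuclideanLin_apply_piLp_toLp, hv]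
      simp
    have := hlow ((WithLp.equiv 2 (Fin n → ℝ)).symm v)
    rw [hTv, norm_zero] at this
    have : ‖(WithLp.equiv 2 (Fin n → ℝ)).symm v‖ ≤ 0 := by nlinarith
    have hz : (WithLp.equiv 2 (Fin n → ℝ)).symm v = 0 := by
      have := norm_nonneg ((WithLp.equiv 2 (Fin n → ℝ)).symm v)
      exact norm_eq_zero.1 (le_antisymm ‹_› this)
    apply hv0
    simpa using congrArg (WithLp.equiv 2 (Fin n → ℝ)) hz
  have hTxstar : T xstar = b := by
    rw [hxstar, hT]
    have hcomp : Matrix.toEuclideanLin A (Matrix.toEuclideanLin A⁻¹ b)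
        = Matrix.toEuclideanLin (A * A⁻¹) b := by
      rw [Matrix.toEuclideanLin_eq_toLin,
        Matrix.toLin_mul (PiLp.basisFun 2 ℝ (Fin n)) (PiLp.basisFun 2 ℝ (Fin n))]
      rfl
    rw [hcomp, Matrix.mul_nonsing_inv A hdet, Matrix.toEuclideanLin_eq_toLin,
      Matrix.toLin_one]
    rfl
  have hgz : ∀ z, g z = T (z - xstar) := by
    intro z
    rw [hg, map_sub, hTxstar, hT]
  -- a single gradient step
  have hstep1 : ∀ y, g (y - η • g y) = g y - η • T (g y) := by
    intro y
    rw [hgz (y - η • g y)]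
    have : y - η • g y - xstar = (y - xstar) - η • g y := by abel
    rw [this, map_sub, map_smul, ← hgz y]
  -- per-step bound
  have hδ0 : ∀ k ≤ K, 0 ≤ δ k := by
    intro k hk
    rcases Nat.eq_zero_or_pos (min m k) with h0 | hpos
    · rw [((hstep k hk).1 h0).2]; norm_num
    · obtain ⟨U, α', hU, hα, hx1, hδ⟩ := (hstep k hk).2 (min m k) rfl hpos
      rw [hδ]
      positivity
  have hkey : ∀ k ≤ K, ‖g (x (k+1))‖ ≤ δ k * ((1 - η * μ) * ‖g (x k)‖) := by
    intro k hk
    rcases Nat.eq_zero_or_pos (min m k) with h0 | hpos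
    · obtain ⟨hx1, hδ⟩ := (hstep k hk).1 h0
      rw [hx1, hstep1, hδ, one_mul]
      exact hSnorm (g (x k))
    · obtain ⟨U, α', hU, hα, hx1, hδ⟩ := (hstep k hk).2 (min m k) rfl hpos
      have stepA : (∑ j : Fin (min m k), α' j • g (x (k - min m k + j)))
            + (1 - ∑ j, α' j) • g (x k)
          = Matrix.toEuclideanLin (1 - U * (Uᵀ * U + lam • 1)⁻¹ * Uᵀ) (g (x k)) := by
        have hUα : (U * ((Uᵀ * U + lam • 1)⁻¹ * Uᵀ)) *ᵥ (WithLp.equiv 2 (Fin n → ℝ)) (g (x k))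
            = U *ᵥ α' := by
          rw [hα, Matrix.mulVec_mulVec]
          rfl
        ext i
        have hR : Matrix.toEuclideanLin (1 - U * (Uᵀ * U + lam • 1)⁻¹ * Uᵀ) (g (x k)) i
            = g (x k) i - ∑ j, U i j * α' j := by
          rw [Matrix.toEuclideanLin_apply]
          rw [PiLp.toLp_apply]
          rw [Matrix.mul_assoc, Matrix.sub_mulVec, Matrix.one_mulVec, ← WithLp.equiv_apply, hUα]
          simp [Matrix.mulVec, dotProduct]
        rw [hR]
        have hL : ((∑ j : Fin (min m k), α' j • g (x (k - min m k + j)))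
              + (1 - ∑ j, α' j) • g (x k)) i
            = (∑ j : Fin (min m k), α' j * g (x (k - min m k + j)) i)
              + (1 - ∑ j, α' j) * g (x k) i := by
          rw [PiLp.add_apply, PiLp.smul_apply, euclid_sum_apply]
          simp only [PiLp.smul_apply, smul_eq_mul]
        rw [hL]
        have hUij : ∀ j : Fin (min m k), U i j = g (x k) i - g (x (k - min m k + j)) i := by
          intro j; rw [hU i j]; simp
        have key : ∑ j : Fin (min m k), U i j * α' j
            = (∑ j, α' j) * g (x k) i - ∑ j, α' j * g (x (k - min m k + j)) i := by
          calc ∑ j : Fin (min m k), U i j * α' j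
              = ∑ j : Fin (min m k),
                  (α' j * g (x k) i - α' j * g (x (k - min m k + j)) i) :=
                Finset.sum_congr rfl (fun j _ => by rw [hUij j]; ring)
            _ = (∑ j : Fin (min m k), α' j * g (x k) i)
                - ∑ j : Fin (min m k), α' j * g (x (k - min m k + j)) i :=
                Finset.sum_sub_distrib _ _
            _ = (∑ j, α' j) * g (x k) i
                - ∑ j : Fin (min m k), α' j * g (x (k - min m k + j)) i := by
                rw [Finset.sum_mul]
        rw [key]
        ring
      set S : EuclideanSpace ℝ (Fin n) →ₗ[ℝ] EuclideanSpace ℝ (Fin n) :=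
        LinearMap.id - η • T with hS
      have hSapp : ∀ w, S w = w - η • T w := by
        intro w; rw [hS]; simp
      have hTz : ∀ y, T (y - η • g y - xstar) = S (g y) := by
        intro y
        rw [← hgz (y - η • g y), hstep1, hSapp]
      have stepB : g (x (k + 1))
          = S ((∑ j : Fin (min m k), α' j • g (x (k - min m k + j)))
              + (1 - ∑ j, α' j) • g (x k)) := by
        have hx1' : x (k + 1) - xstar
            = (∑ j : Fin (min m k), α' j • (x (k - min m k + j)
                - η • g (x (k - min m k + j)) - xstar))
              + (1 - ∑ j, α' j) • (x k - η • g (x k) - xstar) := by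
          rw [hx1]
          simp only [smul_sub, Finset.sum_sub_distrib, ← Finset.sum_smul, sub_smul, one_smul]
          abel
        rw [hgz (x (k + 1)), hx1', map_add, map_sum, map_add, map_sum]
        simp only [map_smul, hTz]
      rw [stepB]
      have hSnorm' : ∀ v, ‖S v‖ ≤ (1 - η * μ) * ‖v‖ := by
        intro v; rw [hSapp]; exact hSnorm v
      rcases eq_or_ne (g (x k)) 0 with hv0 | hv0
      · have hG0 : (∑ j : Fin (min m k), α' j • g (x (k - min m k + j)))
              + (1 - ∑ j, α' j) • g (x k) = 0 := by
          rw [stepA, hv0, map_zero]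
        rw [hG0, map_zero, norm_zero, hv0, norm_zero]
        have := hδ0 k hk
        nlinarith
      · have hvpos : (0:ℝ) < ‖g (x k)‖ := norm_pos_iff.2 hv0
        have hGnorm : ‖(∑ j : Fin (min m k), α' j • g (x (k - min m k + j)))
              + (1 - ∑ j, α' j) • g (x k)‖ = δ k * ‖g (x k)‖ := by
          rw [hδ, div_mul_cancel₀ _ (ne_of_gt hvpos), stepA]
        calc ‖S ((∑ j : Fin (min m k), α' j • g (x (k - min m k + j)))
                + (1 - ∑ j, α' j) • g (x k))‖
            ≤ (1 - η * μ) * ‖(∑ j : Fin (min m k), α' j • g (x (k - min m k + j)))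
                + (1 - ∑ j, α' j) • g (x k)‖ := hSnorm' _
          _ = δ k * ((1 - η * μ) * ‖g (x k)‖) := by rw [hGnorm]; ring
  -- iterate
  have hiter : ∀ k, k ≤ K + 1 →
      ‖g (x k)‖ ≤ (∏ j ∈ Finset.range k, δ j) * (1 - η * μ) ^ k * ‖g (x 0)‖ := by
    intro k
    induction k with
    | zero => intro _; simp
    | succ k ih =>
      intro hk1
      have hk : k ≤ K := Nat.lt_succ_iff.mp hk1
      have h1 := hkey k hk
      have h2 := ih (le_trans (Nat.le_succ k) hk1)
      have hprodnn : 0 ≤ ∏ j ∈ Finset.range k, δ j :=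
        Finset.prod_nonneg (fun j hj => hδ0 j (le_trans (Finset.mem_range.1 hj).le hk))
      have hδk := hδ0 k hk
      calc ‖g (x (k+1))‖ ≤ δ k * ((1 - η * μ) * ‖g (x k)‖) := h1
        _ ≤ δ k * ((1 - η * μ) * ((∏ j ∈ Finset.range k, δ j) * (1 - η * μ) ^ k * ‖g (x 0)‖)) := by
            apply mul_le_mul_of_nonneg_left _ hδk
            exact mul_le_mul_of_nonneg_left h2 honemu
        _ = (∏ j ∈ Finset.range (k+1), δ j) * (1 - η * μ) ^ (k+1) * ‖g (x 0)‖ := by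
            rw [Finset.prod_range_succ, pow_succ]; ring
  -- conclude
  have hfin := hiter (K + 1) le_rfl
  have hlower : μ * ‖x (K + 1) - xstar‖ ≤ ‖g (x (K + 1))‖ := by
    rw [hgz]; exact hlow _
  have hupper : ‖g (x 0)‖ ≤ L * ‖x 0 - xstar‖ := by
    rw [hgz]; exact hAnorm _
  have hprodnn : 0 ≤ (∏ j ∈ Finset.range (K+1), δ j) * (1 - η * μ) ^ (K+1) := by
    have : 0 ≤ ∏ j ∈ Finset.range (K+1), δ j :=
      Finset.prod_nonneg (fun j hj => hδ0 j (Nat.le_of_lt_succ (Finset.mem_range.1 hj)))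
    positivity
  have hchain : μ * ‖x (K + 1) - xstar‖ ≤
      (∏ j ∈ Finset.range (K+1), δ j) * (1 - η * μ) ^ (K+1) * (L * ‖x 0 - xstar‖) := by
    calc μ * ‖x (K + 1) - xstar‖ ≤ ‖g (x (K + 1))‖ := hlower
      _ ≤ (∏ j ∈ Finset.range (K+1), δ j) * (1 - η * μ) ^ (K+1) * ‖g (x 0)‖ := hfin
      _ ≤ (∏ j ∈ Finset.range (K+1), δ j) * (1 - η * μ) ^ (K+1) * (L * ‖x 0 - xstar‖) :=
          mul_le_mul_of_nonneg_left hupper hprodnn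
  rw [← le_div_iff₀' hμ] at hchain
  calc ‖x (K + 1) - xstar‖ ≤
      (∏ j ∈ Finset.range (K+1), δ j) * (1 - η * μ) ^ (K+1) * (L * ‖x 0 - xstar‖) / μ :=
        hchain
    _ = (∏ j ∈ Finset.range (K + 1), δ j) * (1 - η * μ) ^ (K + 1) * (L / μ) * ‖x 0 - xstar‖ := by
        field_simp
end

section
/- Let M be an n×n real symmetric matrix whose eigenvalues all lie in [0, ρ] with 0 < ρ < 1, let x* ∈ ℝⁿ, x_0 ∈ ℝⁿ, and define x_i by x_i − x* = Mⁱ(x_0 − x*) for i = 0, 1, …, k. Set γ = (1 − √(1−ρ))/(1 + √(1−ρ)). Then the minimum over all real coefficients α_0, …, α_k with Σ_{i=0}^{k} α_i = 1 of ‖Σ_{i=0}^{k} α_i x_i − x*‖ is at most (2γᵏ/(1 + γ^{2k})) ‖x_0 − x*‖. -/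
set_option maxHeartbeats 1000000

open scoped RealInnerProductSpace Matrix
open Finset

private lemma cheb_natDegree_le' : ∀ m : ℕ, (Polynomial.Chebyshev.T ℝ (m:ℤ)).natDegree ≤ m := by
  intro m
  induction m using Nat.twoStepInduction with
  | zero => simp [Polynomial.Chebyshev.T_zero]
  | one => simp [Polynomial.Chebyshev.T_one]
  | more m ih1 ih2 =>
    have : ((m + 2 : ℕ) : ℤ) = (m : ℤ) + 2 := by push_cast; ring
    rw [this, Polynomial.Chebyshev.T_add_two]
    refine le_trans (Polynomial.natDegree_sub_le _ _) ?_
    have h1 : (2 * Polynomial.X * Polynomial.Chebyshev.T ℝ ((m:ℤ)+1)).natDegree ≤ m + 2 := by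
      refine le_trans (Polynomial.natDegree_mul_le) ?_
      have h2 : (2 * Polynomial.X : Polynomial ℝ).natDegree ≤ 1 := by
        refine le_trans (Polynomial.natDegree_mul_le) ?_
        simp
      have : ((m:ℤ)+1) = ((m+1 : ℕ) : ℤ) := by push_cast; ring
      rw [this]; omega
    simp only [max_le_iff]
    exact ⟨h1, le_trans ih1 (by omega)⟩

private lemma cheb_eval_half' (u : ℝ) (hu : u ≠ 0) :
    ∀ m : ℕ, (Polynomial.Chebyshev.T ℝ (m:ℤ)).eval ((u + u⁻¹)/2) = (u^m + u⁻¹^m)/2 := by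
  intro m
  induction m using Nat.twoStepInduction with
  | zero => simp [Polynomial.Chebyshev.T_zero]
  | one => simp [Polynomial.Chebyshev.T_one]
  | more m ih1 ih2 =>
    have hc : ((m + 2 : ℕ) : ℤ) = (m : ℤ) + 2 := by push_cast; ring
    have hc1 : ((m:ℤ)+1) = ((m+1 : ℕ) : ℤ) := by push_cast; ring
    rw [hc, Polynomial.Chebyshev.T_add_two]
    simp only [Polynomial.eval_sub, Polynomial.eval_mul, Polynomial.eval_ofNat,
      Polynomial.eval_X, hc1, ih2, ih1]
    field_simp
    linear_combination (u - u⁻¹) * u⁻¹ ^ m * (mul_inv_cancel₀ hu)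

private lemma cheb_abs_le' (m : ℕ) (y : ℝ) (h1 : -1 ≤ y) (h2 : y ≤ 1) :
    |(Polynomial.Chebyshev.T ℝ (m:ℤ)).eval y| ≤ 1 := by
  rw [← Real.cos_arccos h1 h2, Polynomial.Chebyshev.T_real_cos]
  exact Real.abs_cos_le_one _

private lemma norm_sq_sum_smul_orthonormal' {n : ℕ} {E : Type*} [NormedAddCommGroup E]
    [InnerProductSpace ℝ E] {v : Fin n → E} (hv : Orthonormal ℝ v) (a : Fin n → ℝ) :
    ‖∑ j, a j • v j‖^2 = ∑ j, (a j)^2 := by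
  rw [← real_inner_self_eq_norm_sq, sum_inner]
  refine Finset.sum_congr rfl fun j _ => ?_
  rw [real_inner_smul_left, hv.inner_right_fintype]
  ring

private lemma toEuclideanLin_pow_eig' {n : ℕ} (M : Matrix (Fin n) (Fin n) ℝ)
    (v : EuclideanSpace ℝ (Fin n)) (lam : ℝ)
    (h : Matrix.toEuclideanLin M v = lam • v) (i : ℕ) :
    Matrix.toEuclideanLin (M ^ i) v = lam ^ i • v := by
  induction i with
  | zero => simp [Matrix.toEuclideanLin_apply]
  | succ i ih =>
    rw [pow_succ, pow_succ]
    have : Matrix.toEuclideanLin (M ^ i * M) v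
        = Matrix.toEuclideanLin (M ^ i) (Matrix.toEuclideanLin M v) := by
      simp [Matrix.toEuclideanLin_apply, Matrix.mulVec_mulVec]
    rw [this, h, map_smul, ih, smul_smul, mul_comm]

/-- **Chebyshev acceleration of affine combinations of linear fixed-point iterates.**
Let `M` be symmetric with eigenvalues in `[0, ρ]`, `0 < ρ < 1`, and let the iterates
satisfy `x_i − x* = Mⁱ(x_0 − x*)` for `i = 0, …, k`. With
`γ = (1 − √(1−ρ))/(1 + √(1−ρ))`, there exist coefficients `α_0, …, α_k` summing to one
such that `‖Σ α_i x_i − x*‖ ≤ (2γᵏ/(1 + γ^{2k})) ‖x_0 − x*‖`. -/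
theorem chebyshev_affine_combination_bound
    (n k : ℕ)
    (M : Matrix (Fin n) (Fin n) ℝ) (hM : M.IsSymm)
    (ρ : ℝ) (hρ0 : 0 < ρ) (hρ1 : ρ < 1)
    (hspec : ∀ v : EuclideanSpace ℝ (Fin n),
      0 ≤ ⟪Matrix.toEuclideanLin M v, v⟫ ∧
      ⟪Matrix.toEuclideanLin M v, v⟫ ≤ ρ * ‖v‖ ^ 2)
    (γ : ℝ) (hγ : γ = (1 - Real.sqrt (1 - ρ)) / (1 + Real.sqrt (1 - ρ)))
    (xstar : EuclideanSpace ℝ (Fin n))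
    (x : Fin (k + 1) → EuclideanSpace ℝ (Fin n))
    (hx : ∀ i : Fin (k + 1),
      x i - xstar = Matrix.toEuclideanLin (M ^ (i : ℕ)) (x 0 - xstar)) :
    ∃ α : Fin (k + 1) → ℝ, ∑ i, α i = 1 ∧
      ‖(∑ i, α i • x i) - xstar‖ ≤ (2 * γ ^ k / (1 + γ ^ (2 * k))) * ‖x 0 - xstar‖ := by
  -- basic facts about s and γ
  set s := Real.sqrt (1 - ρ) with hs
  have hs2 : s ^ 2 = 1 - ρ := Real.sq_sqrt (by linarith)
  have hs0 : 0 < s := Real.sqrt_pos.mpr (by linarith)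
  have hs1 : s < 1 := by nlinarith [hs2]
  have hγ0 : 0 < γ := by rw [hγ]; apply div_pos <;> linarith
  -- Tval and its Chebyshev characterization
  set Tval : ℝ := (1 + γ ^ (2 * k)) / (2 * γ ^ k) with hTvaldef
  have hT0 : 0 < Tval := by positivity
  have hchange : (γ⁻¹ + γ) / 2 = (2 - ρ) / ρ := by
    have hρs : ρ = 1 - s ^ 2 := by rw [hs2]; ring
    rw [hγ, hρs]
    have h1 : (1:ℝ) + s ≠ 0 := by positivity
    have h2 : (1:ℝ) - s ≠ 0 := by nlinarith
    have h3 : (1:ℝ) - s ^ 2 ≠ 0 := by nlinarith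
    field_simp
    ring
  have hTval : (Polynomial.Chebyshev.T ℝ (k:ℤ)).eval ((2 - ρ) / ρ) = Tval := by
    have := cheb_eval_half' γ⁻¹ (inv_ne_zero hγ0.ne') k
    rw [inv_inv] at this
    rw [← hchange, this, hTvaldef]
    have hγk : γ ^ k ≠ 0 := by positivity
    rw [inv_pow]
    rw [pow_mul]
    field_simp
    ring
  -- the polynomial
  set q : Polynomial ℝ := Polynomial.C Tval⁻¹ *
    (Polynomial.Chebyshev.T ℝ (k:ℤ)).comp (Polynomial.C (2/ρ) * Polynomial.X - 1) with hq
  have heval : ∀ t : ℝ, q.eval t = Tval⁻¹ * (Polynomial.Chebyshev.T ℝ (k:ℤ)).eval (2/ρ * t - 1) := by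
    intro t
    simp [hq, Polynomial.eval_comp]
  have hdeg : q.natDegree < k + 1 := by
    have h1 : q.natDegree ≤ ((Polynomial.Chebyshev.T ℝ (k:ℤ)).comp
        (Polynomial.C (2/ρ) * Polynomial.X - 1)).natDegree := Polynomial.natDegree_C_mul_le _ _
    have h2 : ((Polynomial.Chebyshev.T ℝ (k:ℤ)).comp
        (Polynomial.C (2/ρ) * Polynomial.X - 1)).natDegree ≤
        (Polynomial.Chebyshev.T ℝ (k:ℤ)).natDegree *
        (Polynomial.C (2/ρ) * Polynomial.X - 1).natDegree := Polynomial.natDegree_comp_le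
    have h3 : (Polynomial.C (2/ρ) * Polynomial.X - 1).natDegree ≤ 1 := by
      refine le_trans (Polynomial.natDegree_sub_le _ _) ?_
      simp only [max_le_iff]
      constructor
      · exact le_trans (Polynomial.natDegree_C_mul_le _ _) (by simp)
      · simp
    have h4 := cheb_natDegree_le' k
    calc q.natDegree ≤ _ := h1
      _ ≤ _ := h2
      _ ≤ k * 1 := Nat.mul_le_mul h4 h3
      _ < k + 1 := by omega
  set α : Fin (k+1) → ℝ := fun i => q.coeff i with hα
  have hsum_eval : ∀ t : ℝ, ∑ i : Fin (k+1), α i * t ^ (i:ℕ) = q.eval t := by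
    intro t
    rw [Polynomial.eval_eq_sum_range' hdeg]
    exact Fin.sum_univ_eq_sum_range (fun i => q.coeff i * t ^ i) (k+1)
  have hα1 : ∑ i, α i = 1 := by
    have := hsum_eval 1
    simp only [one_pow, mul_one] at this
    rw [this, heval 1]
    have : 2/ρ * 1 - 1 = (2 - ρ) / ρ := by field_simp
    rw [this, hTval]
    exact inv_mul_cancel₀ hT0.ne'
  have hbound : ∀ t : ℝ, 0 ≤ t → t ≤ ρ → |q.eval t| ≤ Tval⁻¹ := by
    intro t ht0 htρ
    rw [heval, abs_mul, abs_of_pos (inv_pos.mpr hT0)]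
    have h1 : -1 ≤ 2/ρ * t - 1 := by
      have : 0 ≤ 2/ρ * t := by positivity
      linarith
    have h2 : 2/ρ * t - 1 ≤ 1 := by
      rw [div_mul_eq_mul_div, sub_le_iff_le_add, div_le_iff₀ hρ0]
      linarith
    have h3 := cheb_abs_le' k _ h1 h2
    exact mul_le_of_le_one_right (le_of_lt (inv_pos.mpr hT0)) h3
  -- spectral decomposition
  have hH : M.IsHermitian := by
    rw [Matrix.IsHermitian, Matrix.conjTranspose_eq_transpose_of_trivial]; exact hM
  set b := hH.eigenvectorBasis with hb
  set lam := hH.eigenvalues with hlam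
  have heig : ∀ j, Matrix.toEuclideanLin M (b j) = lam j • b j := by
    intro j
    have := hH.mulVec_eigenvectorBasis j
    ext i
    have := congrFun this i
    simpa [Matrix.toEuclideanLin_apply] using this
  have hlam_mem : ∀ j, 0 ≤ lam j ∧ lam j ≤ ρ := by
    intro j
    have hip : ⟪Matrix.toEuclideanLin M (b j), b j⟫ = lam j := by
      rw [heig j, real_inner_smul_left, real_inner_self_eq_norm_sq,
        b.orthonormal.1 j]
      ring
    have hb1 : ‖b j‖ = 1 := b.orthonormal.1 j
    obtain ⟨h1, h2⟩ := hspec (b j)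
    rw [hip] at h1 h2
    rw [hb1] at h2
    constructor
    · exact h1
    · simpa using h2
  set v0 := x 0 - xstar with hv0def
  set c : Fin n → ℝ := fun j => b.repr v0 j with hc
  have hv0 : ∑ j, c j • b j = v0 := b.sum_repr v0
  -- main identity
  have key : ∑ i : Fin (k+1), α i • (x i - xstar) = ∑ j, (q.eval (lam j) * c j) • b j := by
    calc ∑ i : Fin (k+1), α i • (x i - xstar)
        = ∑ i : Fin (k+1), α i • (Matrix.toEuclideanLin (M ^ (i:ℕ)) (∑ j, c j • b j)) := by
          refine Finset.sum_congr rfl fun i _ => ?_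
          rw [hx i, hv0]
      _ = ∑ i : Fin (k+1), ∑ j, (α i * (lam j ^ (i:ℕ) * c j)) • b j := by
          refine Finset.sum_congr rfl fun i _ => ?_
          rw [map_sum, Finset.smul_sum]
          refine Finset.sum_congr rfl fun j _ => ?_
          rw [map_smul, toEuclideanLin_pow_eig' M (b j) (lam j) (heig j) (i:ℕ)]
          rw [smul_smul, smul_smul]
          congr 1
          ring
      _ = ∑ j, ∑ i : Fin (k+1), (α i * (lam j ^ (i:ℕ) * c j)) • b j := Finset.sum_comm
      _ = ∑ j, (q.eval (lam j) * c j) • b j := by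
          refine Finset.sum_congr rfl fun j _ => ?_
          rw [← Finset.sum_smul]
          congr 1
          rw [← hsum_eval (lam j), Finset.sum_mul]
          refine Finset.sum_congr rfl fun i _ => ?_
          ring
  -- rewrite goal LHS
  have hLHS : (∑ i, α i • x i) - xstar = ∑ i : Fin (k+1), α i • (x i - xstar) := by
    rw [show ∑ i : Fin (k+1), α i • (x i - xstar)
        = (∑ i, α i • x i) - (∑ i, α i) • xstar by
      rw [Finset.sum_smul, ← Finset.sum_sub_distrib]
      exact Finset.sum_congr rfl fun i _ => smul_sub _ _ _]
    rw [hα1, one_smul]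
  refine ⟨α, hα1, ?_⟩
  rw [hLHS, key]
  -- norm bound
  have hnorm_y : ‖∑ j, (q.eval (lam j) * c j) • b j‖^2 = ∑ j, (q.eval (lam j) * c j)^2 :=
    norm_sq_sum_smul_orthonormal' b.orthonormal _
  have hnorm_v0 : ‖v0‖^2 = ∑ j, (c j)^2 := by
    rw [← hv0]; exact norm_sq_sum_smul_orthonormal' b.orthonormal _
  have hsq : ‖∑ j, (q.eval (lam j) * c j) • b j‖^2 ≤ (Tval⁻¹ * ‖v0‖)^2 := by
    rw [hnorm_y]
    have : (Tval⁻¹ * ‖v0‖)^2 = Tval⁻¹^2 * ‖v0‖^2 := by ring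
    rw [this, hnorm_v0, Finset.mul_sum]
    refine Finset.sum_le_sum fun j _ => ?_
    obtain ⟨h0, hρj⟩ := hlam_mem j
    have hqb := hbound (lam j) h0 hρj
    have : (q.eval (lam j) * c j)^2 = (q.eval (lam j))^2 * (c j)^2 := by ring
    rw [this]
    have h1 : (q.eval (lam j))^2 ≤ Tval⁻¹^2 := by
      rw [← sq_abs]
      exact pow_le_pow_left₀ (abs_nonneg _) hqb 2
    nlinarith [sq_nonneg (c j)]
  have hfin : ‖∑ j, (q.eval (lam j) * c j) • b j‖ ≤ Tval⁻¹ * ‖v0‖ := by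
    have h2 : 0 ≤ Tval⁻¹ * ‖v0‖ := by positivity
    nlinarith [norm_nonneg (∑ j, (q.eval (lam j) * c j) • b j)]
  have hTinv : Tval⁻¹ = 2 * γ ^ k / (1 + γ ^ (2 * k)) := by
    rw [hTvaldef, inv_div]
  rw [← hTinv]
  exact hfin
end
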